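/- Suppose Ω ⊂ ℙ(ℝ^d) is a properly convex domain, p_0 ∈ Ω, and (g_n) is a sequence in Aut(Ω) such that: (1) g_n(p_0) → x ∈ ∂Ω; (2) g_n^{-1}(p_0) → y ∈ ∂Ω; and (3) there exist lifts ḡ_n ∈ GL_d(ℝ) of g_n with ‖ḡ_n‖ = 1 and a nonzero endomorphism T̄ ∈ End(ℝ^d) with ḡ_n → T̄ (i.e. g_n → [T̄] in ℙ(End(ℝ^d))). Then image(T̄) ⊆ span F_Ω(x), ℙ(ker T̄) ∩ Ω = ∅, and y ∈ ℙ(ker T̄). -/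

import Mathlib

open scoped LinearAlgebra.Projectivization Pointwise
open Projectivization Matrix

namespace CCProj

abbrev PSp (d : ℕ) := ℙ ℝ (Fin d → ℝ)

noncomputable instance (d : ℕ) : TopologicalSpace (PSp d) :=
  inferInstanceAs (TopologicalSpace (Quotient (projectivizationSetoid ℝ (Fin d → ℝ))))

variable {d : ℕ}

noncomputable def glEquivHom (d : ℕ) :
    GL (Fin d) ℝ →* ((Fin d → ℝ) ≃ₗ[ℝ] (Fin d → ℝ)) :=
  (Matrix.GeneralLinearGroup.toLin.trans
    (LinearMap.GeneralLinearGroup.generalLinearEquiv ℝ (Fin d → ℝ))).toMonoidHom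

noncomputable def projPerm (e : (Fin d → ℝ) ≃ₗ[ℝ] (Fin d → ℝ)) : Equiv.Perm (PSp d) where
  toFun := Projectivization.map e.toLinearMap e.injective
  invFun := Projectivization.map e.symm.toLinearMap e.symm.injective
  left_inv x := by
    induction x using Projectivization.ind with
    | h v hv => simp [Projectivization.map_mk]
  right_inv x := by
    induction x using Projectivization.ind with
    | h v hv => simp [Projectivization.map_mk]

noncomputable def glToPerm (d : ℕ) : GL (Fin d) ℝ →* Equiv.Perm (PSp d) where
  toFun g := projPerm (glEquivHom d g)
  map_one' := by
    ext x
    induction x using Projectivization.ind with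
    | h v hv => simp [projPerm, Projectivization.map_mk]
  map_mul' g h := by
    ext x
    induction x using Projectivization.ind with
    | h v hv => simp [projPerm, Projectivization.map_mk]

abbrev PGL (d : ℕ) := GL (Fin d) ℝ ⧸ (glToPerm d).ker

noncomputable def pglPerm (d : ℕ) : PGL d →* Equiv.Perm (PSp d) :=
  QuotientGroup.lift _ (glToPerm d) (fun _ hg => hg)

noncomputable instance : MulAction (PGL d) (PSp d) :=
  MulAction.compHom _ (pglPerm d)

/-! ### Convexity in projective space -/

/-- The affine chart associated to a linear functional `f`: a projective point `x` with
`f(x.rep) ≠ 0` is sent to the unique representative `v` of `x` with `f v = 1`. -/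
noncomputable def chartMap (f : (Fin d → ℝ) →ₗ[ℝ] ℝ) (x : PSp d) : Fin d → ℝ :=
  (f x.rep)⁻¹ • x.rep

/-- A set `C ⊆ ℙ(ℝ^d)` is convex if it lies in some affine chart and is convex there. -/
def IsConvexSet (C : Set (PSp d)) : Prop :=
  ∃ f : (Fin d → ℝ) →ₗ[ℝ] ℝ, (∀ x ∈ C, f x.rep ≠ 0) ∧ Convex ℝ (chartMap f '' C)

/-- A set `C ⊆ ℙ(ℝ^d)` is properly convex if it lies in some affine chart and is
convex and bounded there. -/
def IsProperlyConvexSet (C : Set (PSp d)) : Prop :=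
  ∃ f : (Fin d → ℝ) →ₗ[ℝ] ℝ, (∀ x ∈ C, f x.rep ≠ 0) ∧ Convex ℝ (chartMap f '' C) ∧
    Bornology.IsBounded (chartMap f '' C)

/-- A properly convex domain: a non-empty open properly convex subset of `ℙ(ℝ^d)`. -/
def IsProperlyConvexDomain (Ω : Set (PSp d)) : Prop :=
  IsOpen Ω ∧ Ω.Nonempty ∧ IsProperlyConvexSet Ω

/-- The projectivization of a linear subspace `W ⊆ ℝ^d`, as a subset of `ℙ(ℝ^d)`. -/
def Pb (W : Submodule ℝ (Fin d → ℝ)) : Set (PSp d) := {x | x.rep ∈ W}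

/-- The linear span of (the lines representing) a subset of `ℙ(ℝ^d)`. -/
def projSpan (C : Set (PSp d)) : Submodule ℝ (Fin d → ℝ) :=
  Submodule.span ℝ {v | ∃ x ∈ C, v = Projectivization.rep x}

/-- `C` is open in its span, i.e. equal to its relative interior. -/
def OpenInSpan (C : Set (PSp d)) : Prop :=
  ∃ U : Set (PSp d), IsOpen U ∧ C = U ∩ Pb (projSpan C)

/-! ### The Hilbert metric -/

/-- The set of "cross-ratio" values used to define the Hilbert distance on a properly
convex set `C` which is open in its span: for linear functionals `f, g` which do not
vanish on (the cone over) `C`, one takes `f(ξ)g(η)/(f(η)g(ξ))` where `ξ, η` are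
representatives of `x, y`.  (This quantity is independent of the choice of
representatives.)  For such a set `C`, the supremum of this set is exactly the
cross-ratio `[a,x,y,b]` of the classical definition of the Hilbert distance, where
`a, x, y, b` are aligned in this order on the projective line through `x` and `y`,
with `a, b ∈ ∂C`. -/
def crossSet (C : Set (PSp d)) (x y : PSp d) : Set ℝ :=
  {r | ∃ f g : (Fin d → ℝ) →ₗ[ℝ] ℝ, (∀ z ∈ C, f z.rep ≠ 0) ∧ (∀ z ∈ C, g z.rep ≠ 0) ∧
      r = (f x.rep * g y.rep) / (f y.rep * g x.rep)}

/-- The Hilbert distance on a properly convex set `C ⊆ ℙ(ℝ^d)` which is open in its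
span: `H_C(x,y) = (1/2) log [a,x,y,b]`. -/
noncomputable def hilbertDist (C : Set (PSp d)) (x y : PSp d) : ℝ :=
  (1 / 2) * Real.log (sSup (crossSet C x y))

/-- The distance from a point to a set, for the Hilbert metric on `C`. -/
noncomputable def hilbertDistToSet (C : Set (PSp d)) (x : PSp d) (D : Set (PSp d)) : ℝ :=
  sInf {s | ∃ y ∈ D, s = hilbertDist C x y}

/-- The Hausdorff distance between two subsets of `C`, for the Hilbert metric on `C`. -/
noncomputable def hilbertHausDist (C : Set (PSp d)) (A B : Set (PSp d)) : ℝ :=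
  max (sSup {r | ∃ a ∈ A, r = hilbertDistToSet C a B})
      (sSup {r | ∃ b ∈ B, r = hilbertDistToSet C b A})

/-- The minimal translation length `τ_C(g) = inf_{x ∈ C} H_C(x, gx)`. -/
noncomputable def transLength (C : Set (PSp d)) (g : PGL d) : ℝ :=
  sInf ((fun x => hilbertDist C x (g • x)) '' C)

/-- The minimal translation set `Min(g) = {x ∈ Ω : H_Ω(x,gx) = τ_Ω(g)}`. -/
noncomputable def minSet (Ω : Set (PSp d)) (g : PGL d) : Set (PSp d) :=
  {x ∈ Ω | hilbertDist Ω x (g • x) = transLength Ω g}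

/-! ### Automorphisms, cocompact actions -/

/-- The automorphism group `Aut(Ω) = {g ∈ PGL(d,ℝ) : gΩ = Ω}`. -/
noncomputable def aut (Ω : Set (PSp d)) : Subgroup (PGL d) := MulAction.stabilizer (PGL d) Ω

/-- A collection `G` of elements of `PGL(d,ℝ)` acts co-compactly on `X ⊆ ℙ(ℝ^d)` if
there is a compact `K ⊆ X` with `⋃_{g ∈ G} gK = X`. -/
def ActsCocompactlyOn (G : Set (PGL d)) (X : Set (PSp d)) : Prop :=
  ∃ K : Set (PSp d), K ⊆ X ∧ IsCompact K ∧ (⋃ g ∈ G, g • K) = X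

/-- A naive convex co-compact triple `(Ω, 𝒞, Λ)`. -/
structure IsNCCTriple (Ω 𝒞 : Set (PSp d)) (Λ : Subgroup (PGL d)) : Prop where
  dom : IsProperlyConvexDomain Ω
  lambda_le : Λ ≤ aut Ω
  lambda_inf : (Λ : Set (PGL d)).Infinite
  lambda_disc : DiscreteTopology Λ
  C_nonempty : 𝒞.Nonempty
  C_sub : 𝒞 ⊆ Ω
  C_convex : IsConvexSet 𝒞
  C_closed : closure 𝒞 ∩ Ω ⊆ 𝒞   -- `𝒞` is closed in `Ω`
  C_inv : ∀ γ ∈ Λ, γ • 𝒞 = 𝒞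
  C_cocompact : ActsCocompactlyOn (Λ : Set (PGL d)) 𝒞

/-! ### Segments, convex hulls and faces -/

/-- The smallest convex subset of `cl(C)` containing `X` (the convex hull of `X`
relative to `C`). -/
def convHull (C : Set (PSp d)) (X : Set (PSp d)) : Set (PSp d) :=
  ⋂₀ {D | IsConvexSet D ∧ D ⊆ closure C ∧ X ⊆ D}

/-- The closed segment `[x,y]` joining two points of `cl(C)` inside `cl(C)`. -/
def closedSeg (C : Set (PSp d)) (x y : PSp d) : Set (PSp d) := convHull C {x, y}

/-- The open segment `(x,y) = [x,y] \ {x,y}`. -/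
def openSeg (C : Set (PSp d)) (x y : PSp d) : Set (PSp d) := closedSeg C x y \ {x, y}

/-- The open segment with endpoints `[u]` and `[v]` (for `u, v` linearly independent):
the projective points `[a•u + b•v]` with `a, b > 0`. -/
def openSegV (u v : Fin d → ℝ) : Set (PSp d) :=
  {z | ∃ a b : ℝ, 0 < a ∧ 0 < b ∧ ∃ h : a • u + b • v ≠ 0, z = Projectivization.mk ℝ (a • u + b • v) h}

/-- The projective line through `[u]` and `[v]`. -/
def projLine (u v : Fin d → ℝ) : Set (PSp d) :=
  {z | ∃ a b : ℝ, ∃ h : a • u + b • v ≠ 0, z = Projectivization.mk ℝ (a • u + b • v) h}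

/-- The open face `F_Ω(x)` of a point `x ∈ cl(Ω)`. -/
def face (Ω : Set (PSp d)) (x : PSp d) : Set (PSp d) :=
  insert x {y ∈ closure Ω | ∃ u v : Fin d → ℝ,
    openSegV u v ⊆ closure Ω ∧ x ∈ openSegV u v ∧ y ∈ openSegV u v}

/-- `A` is properly embedded in `B` if `A ⊆ B` and the inclusion is a proper map. -/
def ProperlyEmbedded (A B : Set (PSp d)) : Prop :=
  ∃ h : A ⊆ B, IsProperMap (Set.inclusion h)

/-! ### Simplices -/

/-- The standard open `(k-1)`-dimensional simplex
`{[x₁ : ⋯ : x_k : 0 : ⋯ : 0] : x₁ > 0, …, x_k > 0} ⊆ ℙ(ℝ^d)`. -/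
def stdSimplex (d k : ℕ) : Set (PSp d) :=
  {x | ∃ (v : Fin d → ℝ) (h : v ≠ 0), x = Projectivization.mk ℝ v h ∧
    ∀ i : Fin d, (((i : ℕ) < k → 0 < v i) ∧ (k ≤ (i : ℕ) → v i = 0))}

/-- The `i`-th standard basis point `[e_i] ∈ ℙ(ℝ^d)`. -/
noncomputable def basisPt (d : ℕ) (i : Fin d) : PSp d :=
  Projectivization.mk ℝ (Pi.single i 1) (by
    intro h
    have := congrFun h i
    simp at this)

/-- The absolute values of the complex eigenvalues of a real matrix. -/
noncomputable def eigAbs (M : Matrix (Fin d) (Fin d) ℝ) : Set ℝ :=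
  (fun z : ℂ => ‖z‖) '' spectrum ℂ (M.map Complex.ofReal)

/-- The operator norm on `End(ℝ^d)` associated to the standard Euclidean norm. -/
noncomputable def eucOpNorm (M : Matrix (Fin d) (Fin d) ℝ) : ℝ :=
  ‖Matrix.toEuclideanCLM (𝕜 := ℝ) M‖

/-- The image of a subset of `ℙ(ℝ^d)` under (the projectivization of) an endomorphism
`T` of `ℝ^d`. -/
def projImage (T : Matrix (Fin d) (Fin d) ℝ) (A : Set (PSp d)) : Set (PSp d) :=
  {y | ∃ (v : Fin d → ℝ) (hv : v ≠ 0), Projectivization.mk ℝ v hv ∈ A ∧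
    ∃ hTv : T *ᵥ v ≠ 0, y = Projectivization.mk ℝ (T *ᵥ v) hTv}

/-! ### Infrastructure -/

section Infra
variable {d : ℕ}

lemma mk_smul_eq {v : Fin d → ℝ} {c : ℝ} (hc : c ≠ 0) (h : c • v ≠ 0) (hv : v ≠ 0) :
    Projectivization.mk ℝ (c • v) h = Projectivization.mk ℝ v hv := by
  rw [Projectivization.mk_eq_mk_iff]
  exact ⟨Units.mk0 c hc, rfl⟩

lemma exists_unit_rep {v : Fin d → ℝ} (hv : v ≠ 0) :
    ∃ c : ℝ, c ≠ 0 ∧ (Projectivization.mk ℝ v hv).rep = c • v := by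
  have h := Projectivization.mk_rep (Projectivization.mk ℝ v hv)
  rw [Projectivization.mk_eq_mk_iff] at h
  obtain ⟨a, ha⟩ := h
  exact ⟨(a : ℝ), a.ne_zero, ha.symm⟩

/-- the action of `GL` on the projectivization -/
lemma smul_mk_eq (G : GL (Fin d) ℝ) (v : Fin d → ℝ) (hv : v ≠ 0)
    (h2 : (G : Matrix (Fin d) (Fin d) ℝ) *ᵥ v ≠ 0) :
    (G : PGL d) • Projectivization.mk ℝ v hv =
      Projectivization.mk ℝ ((G : Matrix (Fin d) (Fin d) ℝ) *ᵥ v) h2 := by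
  show pglPerm d (QuotientGroup.mk G) (Projectivization.mk ℝ v hv) = _
  have h1 : pglPerm d (QuotientGroup.mk G) = glToPerm d G := rfl
  rw [h1]
  show (projPerm ((glEquivHom d) G)) (Projectivization.mk ℝ v hv) = _
  simp only [projPerm, Equiv.coe_fn_mk]
  rw [Projectivization.map_mk]
  have h3 : ((glEquivHom d) G) v = (G : Matrix (Fin d) (Fin d) ℝ) *ᵥ v := by
    simp [glEquivHom, Matrix.GeneralLinearGroup.toLin]
  rw [Projectivization.mk_eq_mk_iff]
  exact ⟨1, by simp [h3]⟩

end Infra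

section Infra1b
variable {d : ℕ}
lemma mk_eq_of_eq {v w : Fin d → ℝ} (h : v = w) (hv : v ≠ 0) :
    Projectivization.mk ℝ v hv = Projectivization.mk ℝ w (h ▸ hv) := by subst h; rfl
end Infra1b
section Infra2
variable {d : ℕ}

/-- Total version of `Projectivization.mk`, with junk value `z₀` at `0`. -/
noncomputable def mkP (z₀ : PSp d) (v : Fin d → ℝ) : PSp d :=
  if h : v ≠ 0 then Projectivization.mk ℝ v h else z₀

lemma mkP_eq (z₀ : PSp d) {v : Fin d → ℝ} (h : v ≠ 0) :
    mkP z₀ v = Projectivization.mk ℝ v h := dif_pos h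

lemma continuousOn_mkP (z₀ : PSp d) : ContinuousOn (mkP z₀) {v | v ≠ 0} := by
  rw [continuousOn_iff_continuous_restrict]
  have : Set.domRestrict {v | v ≠ 0} (mkP z₀) =
      fun (p : {v : Fin d → ℝ // v ≠ 0}) => Projectivization.mk ℝ p.1 p.2 := by
    funext p
    exact mkP_eq z₀ p.2
  rw [this]
  exact continuous_quotient_mk'

lemma continuousAt_mkP (z₀ : PSp d) {v : Fin d → ℝ} (h : v ≠ 0) :
    ContinuousAt (mkP z₀) v := by
  refine (continuousOn_mkP z₀).continuousAt ?_
  exact isOpen_ne.mem_nhds h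

/-- The "projection matrix" embedding of projective space. -/
noncomputable def projMat : PSp d → Matrix (Fin d) (Fin d) ℝ :=
  fun z => (z.rep ⬝ᵥ z.rep)⁻¹ • Matrix.vecMulVec z.rep z.rep

lemma vecMulVec_smul_left (c : ℝ) (v w : Fin d → ℝ) :
    Matrix.vecMulVec (c • v) w = c • Matrix.vecMulVec v w := by
  ext i j; simp [Matrix.vecMulVec_apply]; ring

lemma vecMulVec_smul_right (c : ℝ) (v w : Fin d → ℝ) :
    Matrix.vecMulVec v (c • w) = c • Matrix.vecMulVec v w := by
  ext i j; simp [Matrix.vecMulVec_apply]; ring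

lemma vecMulVec_mulVec (v w u : Fin d → ℝ) :
    Matrix.vecMulVec v w *ᵥ u = (w ⬝ᵥ u) • v := by
  ext i
  simp [Matrix.mulVec, Matrix.vecMulVec_apply, dotProduct, Finset.mul_sum, Finset.sum_mul]
  congr 1; funext j; ring

lemma projMat_mk {v : Fin d → ℝ} (h : v ≠ 0) :
    projMat (Projectivization.mk ℝ v h) = (v ⬝ᵥ v)⁻¹ • Matrix.vecMulVec v v := by
  obtain ⟨c, hc, hrep⟩ := exists_unit_rep h
  unfold projMat
  rw [hrep, vecMulVec_smul_left, vecMulVec_smul_right, dotProduct_smul,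
    smul_dotProduct]
  rw [smul_smul, smul_eq_mul, smul_eq_mul, mul_inv]
  have hvv : v ⬝ᵥ v ≠ 0 := fun hz => h (dotProduct_self_eq_zero.mp hz)
  have : (c * c)⁻¹ * (c * (c * 1)) = 1 := by field_simp
  rw [smul_smul]
  congr 1
  field_simp

lemma continuous_projMat : Continuous (projMat (d := d)) := by
  have : Continuous ((projMat (d := d)) ∘ Quotient.mk (projectivizationSetoid ℝ (Fin d → ℝ))) := by
    have he : (projMat (d := d)) ∘ Quotient.mk (projectivizationSetoid ℝ (Fin d → ℝ)) =
        fun (p : {v : Fin d → ℝ // v ≠ 0}) => (p.1 ⬝ᵥ p.1)⁻¹ • Matrix.vecMulVec p.1 p.1 := by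
      funext p
      exact projMat_mk p.2
    rw [he]
    have hd : Continuous fun (p : {v : Fin d → ℝ // v ≠ 0}) => p.1 ⬝ᵥ p.1 := by
      refine continuous_finset_sum _ (fun j _ => ?_)
      exact ((continuous_apply j).comp continuous_subtype_val).mul
        ((continuous_apply j).comp continuous_subtype_val)
    refine Continuous.fun_smul ?_ ?_
    · exact continuous_iff_continuousAt.mpr fun p => (hd.continuousAt).inv₀
        (fun hz => p.2 (dotProduct_self_eq_zero.mp hz))
    · refine continuous_matrix (fun i j => ?_)
      exact ((continuous_apply i).comp continuous_subtype_val).mul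
        ((continuous_apply j).comp continuous_subtype_val)
  exact (isQuotientMap_quotient_mk'.continuous_iff).mpr this

lemma projMat_injective : Function.Injective (projMat (d := d)) := by
  intro z₁ z₂ hz
  have h1 := projMat_mk z₁.rep_nonzero
  have h2 := projMat_mk z₂.rep_nonzero
  rw [Projectivization.mk_rep] at h1 h2
  set v := z₁.rep with hv
  set w := z₂.rep with hw
  have hvv : v ⬝ᵥ v ≠ 0 := fun hz => z₁.rep_nonzero (dotProduct_self_eq_zero.mp hz)
  have hww : w ⬝ᵥ w ≠ 0 := fun hz => z₂.rep_nonzero (dotProduct_self_eq_zero.mp hz)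
  have happ := congrArg (fun M => M *ᵥ w) (h1.symm.trans (hz.trans h2))
  simp only [Matrix.smul_mulVec, vecMulVec_mulVec] at happ
  have hr : ((v ⬝ᵥ v)⁻¹ * (v ⬝ᵥ w)) • v = w := by
    rw [smul_smul] at happ
    rw [happ, smul_smul, inv_mul_cancel₀ hww, one_smul]
  have hvw : v ⬝ᵥ w ≠ 0 := by
    intro h0
    rw [h0, mul_zero, zero_smul] at hr
    exact z₂.rep_nonzero hr.symm
  have hs : (v ⬝ᵥ v)⁻¹ * (v ⬝ᵥ w) ≠ 0 := mul_ne_zero (inv_ne_zero hvv) hvw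
  obtain ⟨c, hc, hcv⟩ : ∃ c : ℝ, c ≠ 0 ∧ c • v = w := ⟨_, hs, hr⟩
  have hmk : Projectivization.mk ℝ w z₂.rep_nonzero = Projectivization.mk ℝ v z₁.rep_nonzero :=
    (Projectivization.mk_eq_mk_iff ℝ w v _ _).mpr ⟨Units.mk0 c hc, by simpa using hcv⟩
  rw [Projectivization.mk_rep, Projectivization.mk_rep] at hmk
  exact hmk.symm

instance : T2Space (PSp d) := by
  constructor
  intro z₁ z₂ hne
  have : projMat z₁ ≠ projMat z₂ := fun h => hne (projMat_injective h)
  obtain ⟨U, V, hU, hV, hz1, hz2, hdisj⟩ := t2_separation this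
  exact ⟨projMat ⁻¹' U, projMat ⁻¹' V, hU.preimage continuous_projMat,
    hV.preimage continuous_projMat, hz1, hz2, hdisj.preimage _⟩

end Infra2
set_option maxHeartbeats 16000000 in
/-- **Proposition 5.5** (dynamics of automorphisms): suppose `p₀ ∈ Ω`,
`g_n ∈ Aut(Ω)`, `g_n p₀ → x ∈ ∂Ω`, `g_n⁻¹ p₀ → y ∈ ∂Ω`, and lifts `ḡ_n` of `g_n` with
Euclidean operator norm `1` converge in `End(ℝ^d)` to `T̄ ≠ 0`.  Then
`image(T̄) ⊆ span F_Ω(x)`, `ℙ(ker T̄) ∩ Ω = ∅` and `y ∈ ℙ(ker T̄)`. -/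
theorem dynamics_of_automorphisms {d : ℕ} (Ω : Set (PSp d))
    (hΩ : IsProperlyConvexDomain Ω) (p₀ : PSp d) (hp₀ : p₀ ∈ Ω)
    (g : ℕ → PGL d) (hg : ∀ n, g n ∈ aut Ω) (x y : PSp d)
    (hx : x ∈ closure Ω \ Ω) (hy : y ∈ closure Ω \ Ω)
    (hgx : Filter.Tendsto (fun n => g n • p₀) Filter.atTop (nhds x))
    (hgy : Filter.Tendsto (fun n => (g n)⁻¹ • p₀) Filter.atTop (nhds y))
    (gbar : ℕ → GL (Fin d) ℝ) (hlift : ∀ n, (gbar n : PGL d) = g n)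
    (hnorm : ∀ n, eucOpNorm ((gbar n : Matrix (Fin d) (Fin d) ℝ)) = 1)
    (Tbar : Matrix (Fin d) (Fin d) ℝ) (hTne : Tbar ≠ 0)
    (hconv : Filter.Tendsto (fun n => (gbar n : Matrix (Fin d) (Fin d) ℝ))
      Filter.atTop (nhds Tbar)) :
    LinearMap.range Tbar.mulVecLin ≤ projSpan (face Ω x) ∧
    Pb (LinearMap.ker Tbar.mulVecLin) ∩ Ω = ∅ ∧
    y ∈ Pb (LinearMap.ker Tbar.mulVecLin) := by
  classical
  obtain ⟨hopen, hΩne, f, hfΩ, hSconv, hSbdd⟩ := hΩ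
  set S : Set (Fin d → ℝ) := chartMap f '' Ω with hSdef
  have hfcont : Continuous f := LinearMap.continuous_of_finiteDimensional f
  -- basic chart facts
  have f_ne : ∀ {w : Fin d → ℝ} (h : w ≠ 0), Projectivization.mk ℝ w h ∈ Ω → f w ≠ 0 := by
    intro w h hmem
    obtain ⟨c, hc, hrep⟩ := exists_unit_rep h
    have h2 := hfΩ _ hmem
    rw [hrep, _root_.map_smul, smul_eq_mul] at h2
    exact fun h0 => h2 (by rw [h0, mul_zero])
  have chartMap_mk : ∀ {w : Fin d → ℝ} (h : w ≠ 0), Projectivization.mk ℝ w h ∈ Ω →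
      chartMap f (Projectivization.mk ℝ w h) = (f w)⁻¹ • w := by
    intro w h hmem
    obtain ⟨c, hc, hrep⟩ := exists_unit_rep h
    unfold chartMap
    rw [hrep, _root_.map_smul, smul_eq_mul, smul_smul, mul_inv]
    congr 1
    rw [mul_comm c⁻¹, mul_assoc, inv_mul_cancel₀ hc, mul_one]
  have hS_elt : ∀ v ∈ S, f v = 1 ∧ ∃ h : v ≠ 0, Projectivization.mk ℝ v h ∈ Ω := by
    intro v hv
    obtain ⟨z, hz, rfl⟩ := hv
    have h1 : f (chartMap f z) = 1 := by
      unfold chartMap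
      rw [_root_.map_smul, smul_eq_mul, inv_mul_cancel₀ (hfΩ _ hz)]
    have h2 : chartMap f z ≠ 0 := by
      intro h0; rw [h0, map_zero] at h1; exact one_ne_zero h1.symm
    refine ⟨h1, h2, ?_⟩
    have h4 : Projectivization.mk ℝ (chartMap f z) h2 =
        Projectivization.mk ℝ z.rep z.rep_nonzero := by
      rw [Projectivization.mk_eq_mk_iff]
      exact ⟨Units.mk0 (f z.rep)⁻¹ (inv_ne_zero (hfΩ _ hz)), by simp [chartMap]⟩
    rw [h4, Projectivization.mk_rep]
    exact hz
  -- the cone over Ω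
  set C : Set (Fin d → ℝ) :=
    {w | 0 < f w ∧ ∀ h : w ≠ 0, Projectivization.mk ℝ w h ∈ Ω} with hCdef
  have C_ne : ∀ {w}, w ∈ C → w ≠ 0 := by
    intro w hw h0
    rw [h0] at hw
    have h1 := hw.1
    simp at h1
  have C_mk : ∀ {w} (hw : w ∈ C), Projectivization.mk ℝ w (C_ne hw) ∈ Ω := fun hw => hw.2 _
  have hSC : S ⊆ C := by
    intro v hv
    obtain ⟨h1, h2, h3⟩ := hS_elt v hv
    exact ⟨by rw [h1]; norm_num, fun h => h3⟩
  have normalize_mem_S : ∀ {w : Fin d → ℝ} (h : w ≠ 0), Projectivization.mk ℝ w h ∈ Ω →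
      (f w)⁻¹ • w ∈ S := by
    intro w h hmem
    rw [← chartMap_mk h hmem]
    exact ⟨_, hmem, rfl⟩
  have C_smul : ∀ {t : ℝ} {w}, 0 < t → w ∈ C → t • w ∈ C := by
    intro t w ht hw
    refine ⟨by rw [_root_.map_smul, smul_eq_mul]; exact mul_pos ht hw.1, fun h => ?_⟩
    rw [mk_smul_eq (ne_of_gt ht) h (C_ne hw)]
    exact C_mk hw
  have C_add : ∀ {w₁ w₂}, w₁ ∈ C → w₂ ∈ C → w₁ + w₂ ∈ C := by
    intro w₁ w₂ h₁ h₂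
    have hc₁ : 0 < f w₁ := h₁.1
    have hc₂ : 0 < f w₂ := h₂.1
    have hs₁ : (f w₁)⁻¹ • w₁ ∈ S := normalize_mem_S (C_ne h₁) (C_mk h₁)
    have hs₂ : (f w₂)⁻¹ • w₂ ∈ S := normalize_mem_S (C_ne h₂) (C_mk h₂)
    have hcc : 0 < f w₁ + f w₂ := by linarith
    have hcomb : (f w₁ / (f w₁ + f w₂)) • ((f w₁)⁻¹ • w₁) +
        (f w₂ / (f w₁ + f w₂)) • ((f w₂)⁻¹ • w₂) ∈ S := by
      refine hSconv hs₁ hs₂ (by positivity) (by positivity) ?_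
      field_simp
    have heq : w₁ + w₂ = (f w₁ + f w₂) •
        ((f w₁ / (f w₁ + f w₂)) • ((f w₁)⁻¹ • w₁) +
         (f w₂ / (f w₁ + f w₂)) • ((f w₂)⁻¹ • w₂)) := by
      rw [smul_add, smul_smul, smul_smul, smul_smul, smul_smul]
      have e1 : (f w₁ + f w₂) * (f w₁ / (f w₁ + f w₂)) * (f w₁)⁻¹ = 1 := by
        field_simp
      have e2 : (f w₁ + f w₂) * (f w₂ / (f w₁ + f w₂)) * (f w₂)⁻¹ = 1 := by
        field_simp
      rw [e1, e2, one_smul, one_smul]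
    rw [heq]
    exact C_smul hcc (hSC hcomb)

  have C_convex : Convex ℝ C := by
    intro w₁ h₁ w₂ h₂ a b ha hb hab
    rcases eq_or_lt_of_le ha with ha0 | ha0
    · have : b = 1 := by linarith
      simp [← ha0, this]
      exact h₂
    rcases eq_or_lt_of_le hb with hb0 | hb0
    · have : a = 1 := by linarith
      simp [← hb0, this]
      exact h₁
    exact C_add (C_smul ha0 h₁) (C_smul hb0 h₂)
  have C_open : IsOpen C := by
    have hCeq : C = {w : Fin d → ℝ | 0 < f w} ∩ (mkP p₀) ⁻¹' Ω := by
      ext w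
      constructor
      · intro hw
        exact ⟨hw.1, by rw [Set.mem_preimage, mkP_eq p₀ (C_ne hw)]; exact C_mk hw⟩
      · rintro ⟨h1, h2⟩
        refine ⟨h1, fun hne => ?_⟩
        rw [Set.mem_preimage, mkP_eq p₀ hne] at h2
        exact h2
    have hfo : IsOpen {w : Fin d → ℝ | 0 < f w} := isOpen_lt continuous_const hfcont
    have hsub : {w : Fin d → ℝ | 0 < f w} ⊆ {v | v ≠ 0} := by
      intro w hw h0
      rw [Set.mem_setOf_eq, h0] at hw
      simp at hw
    rw [hCeq]
    exact ContinuousOn.isOpen_inter_preimage ((continuousOn_mkP p₀).mono hsub) hfo hopen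
  -- p₀'s canonical lift
  set pbar : Fin d → ℝ := chartMap f p₀ with hpbar
  have hpS : pbar ∈ S := ⟨p₀, hp₀, rfl⟩
  have hpC : pbar ∈ C := hSC hpS
  have hpne : pbar ≠ 0 := C_ne hpC
  have hpmk : Projectivization.mk ℝ pbar hpne = p₀ := by
    have h4 : Projectivization.mk ℝ pbar hpne =
        Projectivization.mk ℝ p₀.rep p₀.rep_nonzero := by
      rw [Projectivization.mk_eq_mk_iff]
      exact ⟨Units.mk0 (f p₀.rep)⁻¹ (inv_ne_zero (hfΩ _ hp₀)), by simp [hpbar, chartMap]⟩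
    rw [h4, Projectivization.mk_rep]
  -- boundedness of S
  obtain ⟨R, hRpos, hR⟩ : ∃ R : ℝ, 0 < R ∧ ∀ v ∈ S, ‖v‖ ≤ R := by
    obtain ⟨R', hR'⟩ := hSbdd.exists_norm_le
    exact ⟨max R' 1, lt_of_lt_of_le one_pos (le_max_right _ _),
      fun v hv => le_trans (hR' v hv) (le_max_left _ _)⟩
  have clC_bound : ∀ w ∈ closure C, 0 ≤ f w ∧ ‖w‖ ≤ R * f w := by
    have hsub : C ⊆ {w | 0 ≤ f w ∧ ‖w‖ ≤ R * f w} := by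
      intro w hw
      have hfw := hw.1
      have hns : (f w)⁻¹ • w ∈ S := normalize_mem_S (C_ne hw) (C_mk hw)
      have hle := hR _ hns
      rw [norm_smul, Real.norm_eq_abs, abs_of_pos (inv_pos.mpr hfw)] at hle
      refine ⟨le_of_lt hfw, ?_⟩
      calc ‖w‖ = f w * ((f w)⁻¹ * ‖w‖) := by field_simp
      _ ≤ f w * R := mul_le_mul_of_nonneg_left hle (le_of_lt hfw)
      _ = R * f w := mul_comm _ _
    have hcl : IsClosed {w : Fin d → ℝ | 0 ≤ f w ∧ ‖w‖ ≤ R * f w} := by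
      rw [Set.setOf_and]
      exact (isClosed_le continuous_const hfcont).inter
        (isClosed_le continuous_norm (continuous_const.mul hfcont))
    intro w hw
    exact closure_minimal hsub hcl hw
  have clC_zero : ∀ w ∈ closure C, -w ∈ closure C → w = 0 := by
    intro w hw hw'
    have h1 := clC_bound w hw
    have h2 := clC_bound (-w) hw'
    have hfw0 : f w = 0 := by
      rw [_root_.map_neg] at h2
      linarith [h1.1, h2.1]
    have h3 : ‖w‖ ≤ 0 := by
      have h4 := h1.2
      rw [hfw0, mul_zero] at h4
      exact h4
    exact norm_le_zero_iff.mp h3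
  have clC_smul : ∀ {t : ℝ} {w}, 0 < t → w ∈ closure C → t • w ∈ closure C := by
    intro t w ht hw
    have : Set.MapsTo (fun v => t • v) C C := fun v hv => C_smul ht hv
    exact this.closure (continuous_const_smul t) hw
  have mem_CU : ∀ {w : Fin d → ℝ} (h : w ≠ 0), Projectivization.mk ℝ w h ∈ Ω →
      w ∈ C ∨ -w ∈ C := by
    intro w h hmem
    rcases lt_or_gt_of_ne (f_ne h hmem) with hneg | hpos
    · right
      refine ⟨by rw [_root_.map_neg]; linarith, fun h' => ?_⟩
      have hneg : Projectivization.mk ℝ (-w) h' = Projectivization.mk ℝ w h := by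
        rw [Projectivization.mk_eq_mk_iff]
        exact ⟨Units.mk0 (-1) (by norm_num), by simp⟩
      rw [hneg]; exact hmem
    · exact Or.inl ⟨hpos, fun _ => hmem⟩
  -- matrices and the action
  set M : ℕ → Matrix (Fin d) (Fin d) ℝ := fun n => ((gbar n : Matrix (Fin d) (Fin d) ℝ)) with hM
  have M_ne : ∀ (n : ℕ) {v : Fin d → ℝ}, v ≠ 0 → M n *ᵥ v ≠ 0 := by
    intro n v hv h0
    have h1 : (((gbar n)⁻¹ : GL (Fin d) ℝ) : Matrix (Fin d) (Fin d) ℝ) *ᵥ (M n *ᵥ v) = v := by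
      rw [Matrix.mulVec_mulVec]
      show (((gbar n)⁻¹ * gbar n : GL (Fin d) ℝ) : Matrix (Fin d) (Fin d) ℝ) *ᵥ v = v
      rw [inv_mul_cancel]
      exact Matrix.one_mulVec v
    rw [h0, Matrix.mulVec_zero] at h1
    exact hv h1.symm
  have smulg : ∀ (n : ℕ) {w : Fin d → ℝ} (h : w ≠ 0),
      g n • Projectivization.mk ℝ w h = Projectivization.mk ℝ (M n *ᵥ w) (M_ne n h) := by
    intro n w h
    rw [← hlift n]
    exact smul_mk_eq (gbar n) w h (M_ne n h)
  have gΩ : ∀ (n : ℕ) {z : PSp d}, z ∈ Ω → g n • z ∈ Ω := by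
    intro n z hz
    have h1 : g n • Ω = Ω := MulAction.mem_stabilizer_iff.mp (hg n)
    rw [← h1]
    exact Set.smul_mem_smul_set hz
  -- continuity of mulVec
  have mulVec_cont : Continuous
      (fun p : Matrix (Fin d) (Fin d) ℝ × (Fin d → ℝ) => p.1 *ᵥ p.2) := by
    refine continuous_pi (fun i => ?_)
    have he : (fun p : Matrix (Fin d) (Fin d) ℝ × (Fin d → ℝ) => (p.1 *ᵥ p.2) i)
        = fun p => ∑ j, p.1 i j * p.2 j := by
      funext p
      simp [Matrix.mulVec, dotProduct]
    rw [he]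
    refine continuous_finset_sum _ (fun j _ => Continuous.mul ?_ ?_)
    · exact ((continuous_apply j).comp ((continuous_apply i).comp continuous_fst))
    · exact (continuous_apply j).comp continuous_snd
  have tendM : ∀ w : Fin d → ℝ,
      Filter.Tendsto (fun n => M n *ᵥ w) Filter.atTop (nhds (Tbar *ᵥ w)) :=
    fun w => (mulVec_cont.tendsto (Tbar, w)).comp (hconv.prodMk_nhds tendsto_const_nhds)
  -- sign coherence
  have negC_open : IsOpen (-C) := C_open.neg
  have hdisjC : Disjoint C (-C) := by
    rw [Set.disjoint_left]
    intro w hw hw'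
    have h1 := hw.1
    have h2 := (Set.mem_neg.mp hw').1
    rw [_root_.map_neg] at h2
    linarith
  have signs : ∀ n, (∀ w ∈ C, M n *ᵥ w ∈ C) ∨ (∀ w ∈ C, -(M n *ᵥ w) ∈ C) := by
    intro n
    have himguni : (fun w => M n *ᵥ w) '' C ⊆ C ∪ (-C) := by
      rintro v ⟨w, hw, rfl⟩
      have hmem : Projectivization.mk ℝ (M n *ᵥ w) (M_ne n (C_ne hw)) ∈ Ω := by
        rw [← smulg n (C_ne hw)]
        exact gΩ n (C_mk hw)
      rcases mem_CU (M_ne n (C_ne hw)) hmem with h | h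
      · exact Or.inl h
      · exact Or.inr (Set.mem_neg.mpr h)
    have hconv2 : Convex ℝ ((fun w => M n *ᵥ w) '' C) := by
      have : (fun w : Fin d → ℝ => M n *ᵥ w) = ⇑(M n).mulVecLin := by
        funext w
        rw [Matrix.mulVecLin_apply]
      rw [this]
      exact C_convex.linear_image _
    have hpre : IsPreconnected ((fun w => M n *ᵥ w) '' C) := hconv2.isPreconnected
    rcases hpre.subset_or_subset C_open negC_open hdisjC himguni with h | h
    · left; intro w hw; exact h ⟨w, hw, rfl⟩
    · right; intro w hw; exact Set.mem_neg.mp (h ⟨w, hw, rfl⟩)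
  set sgn : ℕ → ℝ := fun n => if (∀ w ∈ C, M n *ᵥ w ∈ C) then 1 else -1 with hsgn
  have sgn_mem : ∀ n, ∀ w ∈ C, sgn n • (M n *ᵥ w) ∈ C := by
    intro n w hw
    by_cases hcase : ∀ w ∈ C, M n *ᵥ w ∈ C
    · have : sgn n = 1 := if_pos hcase
      rw [this, one_smul]
      exact hcase w hw
    · have hs : sgn n = -1 := if_neg hcase
      rcases signs n with h | h
      · exact absurd h hcase
      · rw [hs, neg_one_smul]
        exact h w hw
  have sgn_pm : ∀ n, sgn n = 1 ∨ sgn n = -1 := by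
    intro n
    by_cases hcase : ∀ w ∈ C, M n *ᵥ w ∈ C
    · exact Or.inl (if_pos hcase)
    · exact Or.inr (if_neg hcase)
  obtain ⟨σ, hσne, hσfreq⟩ : ∃ σ : ℝ, σ ≠ 0 ∧ ∃ᶠ n in Filter.atTop, sgn n = σ := by
    by_contra hcon
    push_neg at hcon
    have h1 := (hcon 1 one_ne_zero)
    have h2 := (hcon (-1) (by norm_num))
    obtain ⟨n, hn1, hn2⟩ := (h1.and h2).exists
    rcases sgn_pm n with h | h
    · exact hn1 h
    · exact hn2 h
  -- claim: the kernel misses Ω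
  have ker_dis : Pb (LinearMap.ker Tbar.mulVecLin) ∩ Ω = ∅ := by
    rcases Set.eq_empty_or_nonempty (Pb (LinearMap.ker Tbar.mulVecLin) ∩ Ω) with he | hne2
    · exact he
    exfalso
    obtain ⟨z, hzk, hzΩ⟩ := hne2
    have hzrep : Tbar *ᵥ z.rep = 0 := by
      have h := hzk
      rw [Pb, Set.mem_setOf_eq, LinearMap.mem_ker, Matrix.mulVecLin_apply] at h
      exact h
    set v₀ : Fin d → ℝ := chartMap f z with hv₀
    have hv₀C : v₀ ∈ C := hSC ⟨z, hzΩ, rfl⟩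
    have hTv₀ : Tbar *ᵥ v₀ = 0 := by
      show Tbar *ᵥ ((f z.rep)⁻¹ • z.rep) = 0
      rw [Matrix.mulVec_smul, hzrep, smul_zero]
    obtain ⟨ε, hεpos, hεball⟩ := Metric.isOpen_iff.mp C_open v₀ hv₀C
    have key : ∀ w : Fin d → ℝ, ‖w‖ < ε → Tbar *ᵥ w = 0 := by
      intro w hwnorm
      have hmem1 : v₀ + w ∈ C := by
        refine hεball ?_
        rw [Metric.mem_ball, dist_eq_norm, add_sub_cancel_left]
        exact hwnorm
      have hmem2 : v₀ - w ∈ C := by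
        refine hεball ?_
        rw [Metric.mem_ball, dist_eq_norm, sub_sub_cancel_left, norm_neg]
        exact hwnorm
      have hc1 : σ • (Tbar *ᵥ (v₀ + w)) ∈ closure C := by
        refine mem_closure_of_frequently_of_tendsto ?_ ((tendM (v₀ + w)).const_smul σ)
        refine hσfreq.mono (fun n hn => ?_)
        rw [← hn]
        exact sgn_mem n _ hmem1
      have hc2 : σ • (Tbar *ᵥ (v₀ - w)) ∈ closure C := by
        refine mem_closure_of_frequently_of_tendsto ?_ ((tendM (v₀ - w)).const_smul σ)
        refine hσfreq.mono (fun n hn => ?_)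
        rw [← hn]
        exact sgn_mem n _ hmem2
      rw [Matrix.mulVec_add, hTv₀, zero_add] at hc1
      rw [Matrix.mulVec_sub, hTv₀, zero_sub, smul_neg] at hc2
      have h0 : σ • (Tbar *ᵥ w) = 0 := clC_zero _ hc1 hc2
      rcases smul_eq_zero.mp h0 with h | h
      · exact absurd h hσne
      · exact h
    have hT0 : Tbar = 0 := by
      ext i j
      have hsn : ‖(Pi.single j (ε/2) : Fin d → ℝ)‖ < ε := by
        rw [Pi.norm_single, Real.norm_eq_abs, abs_of_pos (by linarith)]
        linarith
      have := key _ hsn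
      have happ := congrFun this i
      rw [Matrix.mulVec_single] at happ
      replace happ : Tbar i j * (ε / 2) = 0 := happ
      rcases mul_eq_zero.mp happ with h | h
      · simp [h]
      · linarith
    exact hTne hT0
  have Tv_ne : ∀ {w : Fin d → ℝ} (h : w ≠ 0),
      Projectivization.mk ℝ w h ∈ Ω → Tbar *ᵥ w ≠ 0 := by
    intro w h hmem h0
    obtain ⟨c, hc, hrep⟩ := exists_unit_rep h
    have hker : Projectivization.mk ℝ w h ∈ Pb (LinearMap.ker Tbar.mulVecLin) := by
      rw [Pb, Set.mem_setOf_eq, LinearMap.mem_ker, Matrix.mulVecLin_apply, hrep,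
        Matrix.mulVec_smul, h0, smul_zero]
    rw [Set.eq_empty_iff_forall_notMem] at ker_dis
    exact ker_dis _ ⟨hker, hmem⟩
  -- limits of orbit points
  have limΩ : ∀ {w : Fin d → ℝ} (hw : w ∈ C),
      Projectivization.mk ℝ (Tbar *ᵥ w) (Tv_ne (C_ne hw) (C_mk hw)) ∈ closure Ω := by
    intro w hw
    have hTw : Tbar *ᵥ w ≠ 0 := Tv_ne (C_ne hw) (C_mk hw)
    have htend : Filter.Tendsto (fun n => mkP p₀ (M n *ᵥ w)) Filter.atTop
        (nhds (mkP p₀ (Tbar *ᵥ w))) :=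
      (continuousAt_mkP p₀ hTw).tendsto.comp (tendM w)
    have hmemΩ : ∀ n, mkP p₀ (M n *ᵥ w) ∈ Ω := by
      intro n
      rw [mkP_eq p₀ (M_ne n (C_ne hw)), ← smulg n (C_ne hw)]
      exact gΩ n (C_mk hw)
    have hcl := mem_closure_of_tendsto htend (Filter.Eventually.of_forall hmemΩ)
    rw [mkP_eq p₀ hTw] at hcl
    exact hcl
  -- x is the projective image of p₀'s lift
  have hpΩ : Projectivization.mk ℝ pbar hpne ∈ Ω := by rw [hpmk]; exact hp₀
  have hTp : Tbar *ᵥ pbar ≠ 0 := Tv_ne hpne hpΩ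
  have hx_eq : x = Projectivization.mk ℝ (Tbar *ᵥ pbar) hTp := by
    have h1 : ∀ n, g n • p₀ = mkP p₀ (M n *ᵥ pbar) := by
      intro n
      rw [mkP_eq p₀ (M_ne n hpne), ← hpmk, smulg n hpne]
    have h2 : Filter.Tendsto (fun n => mkP p₀ (M n *ᵥ pbar)) Filter.atTop
        (nhds (mkP p₀ (Tbar *ᵥ pbar))) := (continuousAt_mkP p₀ hTp).tendsto.comp (tendM pbar)
    rw [mkP_eq p₀ hTp] at h2
    exact tendsto_nhds_unique hgx (h2.congr (fun n => (h1 n).symm))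
  -- moving a little inside the cone
  have small_step : ∀ {v : Fin d → ℝ}, v ∈ C → ∀ u : Fin d → ℝ,
      ∃ t : ℝ, 0 < t ∧ v + t • u ∈ C := by
    intro v hv u
    obtain ⟨ε, hε, hball⟩ := Metric.isOpen_iff.mp C_open v hv
    refine ⟨ε / (2 * (‖u‖ + 1)), by positivity, hball ?_⟩
    rw [Metric.mem_ball, dist_eq_norm, add_sub_cancel_left, norm_smul, Real.norm_eq_abs,
      abs_of_pos (by positivity)]
    calc ε / (2 * (‖u‖ + 1)) * ‖u‖ ≤ ε / (2 * (‖u‖ + 1)) * (‖u‖ + 1) :=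
          mul_le_mul_of_nonneg_left (by linarith) (by positivity)
    _ = ε / 2 := by field_simp
    _ < ε := by linarith [hε]
  -- C spans everything
  have spanC : ∀ v : Fin d → ℝ, v ∈ Submodule.span ℝ C := by
    intro v
    obtain ⟨t, ht, hmem⟩ := small_step hpC v
    have h2 : t • v ∈ Submodule.span ℝ C := by
      have h3 : (pbar + t • v) - pbar ∈ Submodule.span ℝ C :=
        Submodule.sub_mem _ (Submodule.subset_span hmem) (Submodule.subset_span hpC)
      rwa [add_sub_cancel_left] at h3
    have h4 := Submodule.smul_mem _ t⁻¹ h2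
    rwa [smul_smul, inv_mul_cancel₀ (ne_of_gt ht), one_smul] at h4
  -- images of cone points are in the face of x
  have face_mem : ∀ {w : Fin d → ℝ} (hw : w ∈ C),
      Projectivization.mk ℝ (Tbar *ᵥ w) (Tv_ne (C_ne hw) (C_mk hw)) ∈ face Ω x := by
    intro w hw
    have hTw : Tbar *ᵥ w ≠ 0 := Tv_ne (C_ne hw) (C_mk hw)
    by_cases hxeq : Projectivization.mk ℝ (Tbar *ᵥ w) hTw = x
    · rw [hxeq]
      exact Set.mem_insert x _
    obtain ⟨a, ha, hw1⟩ := small_step hpC (pbar - w)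
    obtain ⟨b, hb, hw2⟩ := small_step hw (w - pbar)
    set w1 : Fin d → ℝ := pbar + a • (pbar - w) with hw1def
    set w2 : Fin d → ℝ := w + b • (w - pbar) with hw2def
    have id1 : (1 + b) • w1 + a • w2 = (1 + a + b) • pbar := by
      rw [hw1def, hw2def]
      module
    have id2 : b • w1 + (1 + a) • w2 = (1 + a + b) • w := by
      rw [hw1def, hw2def]
      module
    have hsum : (0:ℝ) < 1 + a + b := by linarith
    have hTid1 : (1 + b) • (Tbar *ᵥ w1) + a • (Tbar *ᵥ w2) = (1 + a + b) • (Tbar *ᵥ pbar) := by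
      have h5 := congrArg (fun u => Tbar *ᵥ u) id1
      simpa [Matrix.mulVec_add, Matrix.mulVec_smul] using h5
    have hTid2 : b • (Tbar *ᵥ w1) + (1 + a) • (Tbar *ᵥ w2) = (1 + a + b) • (Tbar *ᵥ w) := by
      have h5 := congrArg (fun u => Tbar *ᵥ u) id2
      simpa [Matrix.mulVec_add, Matrix.mulVec_smul] using h5
    have hTz1 : (1 + a + b) • (Tbar *ᵥ pbar) ≠ 0 := smul_ne_zero (ne_of_gt hsum) hTp
    have hTz2 : (1 + a + b) • (Tbar *ᵥ w) ≠ 0 := smul_ne_zero (ne_of_gt hsum) hTw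
    refine Set.mem_insert_iff.mpr (Or.inr ⟨limΩ hw, Tbar *ᵥ w1, Tbar *ᵥ w2, ?_, ?_, ?_⟩)
    · -- the open segment is in the closure of Ω
      rintro z ⟨α, β, hα, hβ, hne, rfl⟩
      have hcomb : α • w1 + β • w2 ∈ C := C_add (C_smul hα hw1) (C_smul hβ hw2)
      have heqv : α • (Tbar *ᵥ w1) + β • (Tbar *ᵥ w2) = Tbar *ᵥ (α • w1 + β • w2) := by
        simp [Matrix.mulVec_add, Matrix.mulVec_smul]
      rw [mk_eq_of_eq heqv hne]
      exact limΩ hcomb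
    · -- x is on the open segment
      refine ⟨1 + b, a, by linarith, ha, hTid1 ▸ hTz1, ?_⟩
      rw [mk_eq_of_eq hTid1 (hTid1 ▸ hTz1), hx_eq]
      exact (mk_smul_eq (ne_of_gt hsum) hTz1 hTp).symm
    · -- the image point is on the open segment
      refine ⟨b, 1 + a, hb, by linarith, hTid2 ▸ hTz2, ?_⟩
      rw [mk_eq_of_eq hTid2 (hTid2 ▸ hTz2)]
      exact (mk_smul_eq (ne_of_gt hsum) hTz2 hTw).symm
  -- Claim 7
  have claim7 : LinearMap.range Tbar.mulVecLin ≤ projSpan (face Ω x) := by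
    rintro v ⟨u, rfl⟩
    have himg : Tbar.mulVecLin u ∈ Submodule.map Tbar.mulVecLin (Submodule.span ℝ C) :=
      ⟨u, spanC u, rfl⟩
    rw [Submodule.map_span] at himg
    refine Submodule.span_le.mpr ?_ himg
    rintro _ ⟨w, hw, rfl⟩
    have hfm := face_mem hw
    obtain ⟨c, hc, hrep⟩ := exists_unit_rep (Tv_ne (C_ne hw) (C_mk hw))
    have heq2 : Tbar *ᵥ w =
        c⁻¹ • (Projectivization.mk ℝ (Tbar *ᵥ w) (Tv_ne (C_ne hw) (C_mk hw))).rep := by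
      rw [hrep, smul_smul, inv_mul_cancel₀ hc, one_smul]
    rw [Matrix.mulVecLin_apply, heq2]
    refine Submodule.smul_mem _ _ (Submodule.subset_span ?_)
    exact ⟨_, hfm, rfl⟩
  -- the closure of S is compact and covers the closure of Ω projectively
  have hclS_f : ∀ v ∈ closure S, f v = 1 := fun v hv =>
    closure_minimal (fun w hw => (hS_elt w hw).1)
      (isClosed_eq hfcont continuous_const) hv
  have hclS_ne : ∀ v ∈ closure S, v ≠ 0 := by
    intro v hv h0
    have h1 := hclS_f v hv
    rw [h0, _root_.map_zero] at h1
    exact zero_ne_one h1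
  have hclS_sub_clC : closure S ⊆ closure C := closure_mono hSC
  have hKcomp : IsCompact (closure S) := hSbdd.isCompact_closure
  have himg_comp : IsCompact (mkP p₀ '' closure S) :=
    hKcomp.image_of_continuousOn ((continuousOn_mkP p₀).mono (fun v hv => hclS_ne v hv))
  have chart_mk_self : ∀ {z : PSp d}, z ∈ Ω → ∀ (h : chartMap f z ≠ 0),
      Projectivization.mk ℝ (chartMap f z) h = z := by
    intro z hz h
    have h4 : Projectivization.mk ℝ (chartMap f z) h =
        Projectivization.mk ℝ z.rep z.rep_nonzero := by
      rw [Projectivization.mk_eq_mk_iff]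
      exact ⟨Units.mk0 (f z.rep)⁻¹ (inv_ne_zero (hfΩ _ hz)), by simp [chartMap]⟩
    rw [h4, Projectivization.mk_rep]
  have hΩ_sub : Ω ⊆ mkP p₀ '' closure S := by
    intro z hz
    have h1 : chartMap f z ∈ S := ⟨z, hz, rfl⟩
    have h2 : chartMap f z ≠ 0 := C_ne (hSC h1)
    exact ⟨chartMap f z, subset_closure h1, by rw [mkP_eq p₀ h2]; exact chart_mk_self hz h2⟩
  have hclΩ_sub : closure Ω ⊆ mkP p₀ '' closure S :=
    closure_minimal hΩ_sub himg_comp.isClosed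
  obtain ⟨xbar, hxbarS, hxbar_eq⟩ := hclΩ_sub hx.1
  have hxbar_ne : xbar ≠ 0 := hclS_ne _ hxbarS
  have hxbar_clC : xbar ∈ closure C := hclS_sub_clC hxbarS
  have hxbar_mk : Projectivization.mk ℝ xbar hxbar_ne = x := by
    rw [← mkP_eq p₀ hxbar_ne]; exact hxbar_eq
  have hxbar_notC : xbar ∉ C := by
    intro hmem
    have h1 := C_mk hmem
    rw [hxbar_mk] at h1
    exact hx.2 h1
  -- the supporting functional at x
  obtain ⟨φ, hφ⟩ := geometric_hahn_banach_open_point C_convex C_open hxbar_notC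
  have hφC_le : ∀ w ∈ C, φ w ≤ 0 := by
    intro w hw
    by_contra hpos
    push_neg at hpos
    have ht : 0 < (|φ xbar| + 1) / φ w := by positivity
    have h1 := hφ _ (C_smul ht hw)
    rw [φ.map_smul, smul_eq_mul, div_mul_cancel₀ _ (ne_of_gt hpos)] at h1
    have h2 := le_abs_self (φ xbar)
    linarith
  have hφclC : closure C ⊆ {w | φ w ≤ 0} :=
    closure_minimal (fun w hw => hφC_le w hw) (isClosed_le φ.continuous continuous_const)
  have hφxbar : φ xbar = 0 := by
    refine le_antisymm (hφclC hxbar_clC) ?_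
    by_contra hneg
    push_neg at hneg
    have hp1 : φ pbar ≤ 0 := hφC_le _ hpC
    rcases eq_or_lt_of_le hp1 with heq | hlt
    · have h2 := hφ _ hpC
      rw [← heq] at hneg
      exact absurd hneg (not_lt.mpr (le_of_lt h2))
    · have ht : 0 < φ xbar / (2 * φ pbar) := div_pos_of_neg_of_neg hneg (by linarith)
      have h2 := hφ _ (C_smul ht hpC)
      have h3 : φ xbar / (2 * φ pbar) * φ pbar = φ xbar / 2 := by
        field_simp [ne_of_lt hlt]
      rw [φ.map_smul, smul_eq_mul, h3] at h2
      linarith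
  have hφCneg : ∀ w ∈ C, φ w < 0 := fun w hw => hφxbar ▸ hφ w hw
  have hxker : φ x.rep = 0 := by
    obtain ⟨c, hc, hrep⟩ := exists_unit_rep hxbar_ne
    rw [hxbar_mk] at hrep
    rw [hrep, φ.map_smul, smul_eq_mul, hφxbar, mul_zero]
  -- every point of the face of x is killed by φ
  have face_ker : ∀ z ∈ face Ω x, φ z.rep = 0 := by
    intro z hz
    rcases Set.mem_insert_iff.mp hz with rfl | hz2
    · exact hxker
    obtain ⟨hzΩ, u, v, hseg, hxseg, hzseg⟩ := hz2
    obtain ⟨a₁, b₁, ha₁, hb₁, hne₁, hxeq₁⟩ := hxseg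
    obtain ⟨a₂, b₂, ha₂, hb₂, hne₂, hzeq₂⟩ := hzseg
    by_cases hdep : ∃ cc : ℝ × ℝ, cc ≠ 0 ∧ cc.1 • u + cc.2 • v = 0
    · -- degenerate case : the segment is a single point, so z = x
      obtain ⟨⟨ca, cb⟩, hcc, hrel⟩ := hdep
      have collapse : ∀ (α β : ℝ) (h : α • u + β • v ≠ 0) (α' β' : ℝ)
          (h' : α' • u + β' • v ≠ 0),
          Projectivization.mk ℝ (α • u + β • v) h =
            Projectivization.mk ℝ (α' • u + β' • v) h' := by
        intro α β h α' β' h'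
        rcases eq_or_ne ca 0 with hca | hca
        · have hcb : cb ≠ 0 := by
            intro h0
            exact hcc (by simp [hca, h0, Prod.ext_iff])
          have hv0 : v = 0 := by
            have h7 : cb • v = 0 := by
              rw [hca, zero_smul, zero_add] at hrel
              exact hrel
            exact (smul_eq_zero.mp h7).resolve_left hcb
          have hp : α • u + β • v = α • u := by rw [hv0, smul_zero, add_zero]
          have hq : α' • u + β' • v = α' • u := by rw [hv0, smul_zero, add_zero]
          have hu0 : u ≠ 0 := by
            intro h0
            rw [hp, h0, smul_zero] at h
            exact h rfl
          have hα : α ≠ 0 := by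
            intro h0
            rw [hp, h0, zero_smul] at h
            exact h rfl
          have hα' : α' ≠ 0 := by
            intro h0
            rw [hq, h0, zero_smul] at h'
            exact h' rfl
          rw [mk_eq_of_eq hp h, mk_eq_of_eq hq h', mk_smul_eq hα _ hu0, mk_smul_eq hα' _ hu0]
        · have h7 : ca • u = -(cb • v) := eq_neg_of_add_eq_zero_left hrel
          have h8 := congrArg (fun w => ca⁻¹ • w) h7
          simp only [smul_smul, inv_mul_cancel₀ hca, one_smul] at h8
          have h6 : u = (-(cb) / ca) • v := by
            rw [h8]
            match_scalars
            field_simp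
          have hp : α • u + β • v = (α * (-(cb) / ca) + β) • v := by rw [h6]; module
          have hq : α' • u + β' • v = (α' * (-(cb) / ca) + β') • v := by rw [h6]; module
          have hv0 : v ≠ 0 := by
            intro h0
            rw [hp, h0, smul_zero] at h
            exact h rfl
          have hco : α * (-(cb) / ca) + β ≠ 0 := by
            intro h0
            rw [hp, h0, zero_smul] at h
            exact h rfl
          have hco' : α' * (-(cb) / ca) + β' ≠ 0 := by
            intro h0
            rw [hq, h0, zero_smul] at h'
            exact h' rfl
          rw [mk_eq_of_eq hp h, mk_eq_of_eq hq h', mk_smul_eq hco _ hv0, mk_smul_eq hco' _ hv0]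
      have hzx : z = x := by
        rw [hzeq₂, hxeq₁]
        exact collapse a₂ b₂ hne₂ a₁ b₁ hne₁
      rw [hzx]
      exact hxker
    -- nondegenerate case
    push_neg at hdep
    have hcomb_ne : ∀ {α β : ℝ}, 0 < α → 0 < β → α • u + β • v ≠ 0 := by
      intro α β hα hβ
      exact hdep (α, β) (by simp [Prod.ext_iff, ne_of_gt hα])
    have hsegcl : ∀ {α β : ℝ}, 0 < α → 0 < β →
        (α • u + β • v ∈ closure C) ∨ (-(α • u + β • v) ∈ closure C) := by
      intro α β hα hβ
      have hmseg : Projectivization.mk ℝ (α • u + β • v) (hcomb_ne hα hβ) ∈ closure Ω :=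
        hseg ⟨α, β, hα, hβ, hcomb_ne hα hβ, rfl⟩
      obtain ⟨k, hkS, hk_eq⟩ := hclΩ_sub hmseg
      have hkne : k ≠ 0 := hclS_ne _ hkS
      have hkclC : k ∈ closure C := hclS_sub_clC hkS
      rw [mkP_eq p₀ hkne, Projectivization.mk_eq_mk_iff] at hk_eq
      obtain ⟨cu, hcu⟩ := hk_eq
      have hcune : (cu : ℝ) ≠ 0 := cu.ne_zero
      have h7 : α • u + β • v = (cu : ℝ)⁻¹ • k := by
        rw [← hcu]
        rw [Units.smul_def]
        rw [smul_smul, inv_mul_cancel₀ hcune, one_smul]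
      rcases lt_or_gt_of_ne hcune with hneg | hpos
      · right
        rw [h7, ← neg_smul]
        exact clC_smul (by simpa using inv_lt_zero'.mpr hneg) hkclC
      · left
        rw [h7]
        exact clC_smul (inv_pos.mpr hpos) hkclC
    -- the quadrant image is connected, hence on one side
    set L : (ℝ × ℝ) →ₗ[ℝ] (Fin d → ℝ) :=
      (LinearMap.fst ℝ ℝ ℝ).smulRight u + (LinearMap.snd ℝ ℝ ℝ).smulRight v with hL
    have hLapp : ∀ p : ℝ × ℝ, L p = p.1 • u + p.2 • v := fun p => rfl
    set Q : Set (ℝ × ℝ) := {p | 0 < p.1 ∧ 0 < p.2} with hQ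
    have hQconv : Convex ℝ Q := by
      intro p hp q hq a b ha hb hab
      constructor
      · show 0 < a * p.1 + b * q.1
        rcases eq_or_lt_of_le ha with h | h
        · rw [← h, zero_mul, zero_add]
          exact mul_pos (by linarith) hq.1
        · have h1 : 0 ≤ b * q.1 := mul_nonneg hb (le_of_lt hq.1)
          have h2 := mul_pos h hp.1
          linarith
      · show 0 < a * p.2 + b * q.2
        rcases eq_or_lt_of_le ha with h | h
        · rw [← h, zero_mul, zero_add]
          exact mul_pos (by linarith) hq.2
        · have h1 : 0 ≤ b * q.2 := mul_nonneg hb (le_of_lt hq.2)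
          have h2 := mul_pos h hp.2
          linarith
    have hpre2 : IsPreconnected (⇑L '' Q) := (hQconv.linear_image L).isPreconnected
    have hzero_not : (0 : Fin d → ℝ) ∉ ⇑L '' Q := by
      rintro ⟨p, hp, hp0⟩
      exact hcomb_ne hp.1 hp.2 ((hLapp p) ▸ hp0)
    have hsub_union : ⇑L '' Q ⊆ closure C ∪ -(closure C) := by
      rintro kk ⟨p, hp, rfl⟩
      rw [hLapp]
      rcases hsegcl hp.1 hp.2 with h | h
      · exact Or.inl h
      · exact Or.inr (Set.mem_neg.mpr h)
    have hdi : (⇑L '' Q) ⊆ closure C ∨ (⇑L '' Q) ⊆ -(closure C) := by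
      by_contra hcon2
      push_neg at hcon2
      obtain ⟨hc1, hc2⟩ := hcon2
      have hU : IsOpen (-(closure C))ᶜ := (isClosed_closure (s := C)).neg.isOpen_compl
      have hV : IsOpen ((closure C) : Set (Fin d → ℝ))ᶜ := isClosed_closure.isOpen_compl
      have hcover : ⇑L '' Q ⊆ (-(closure C))ᶜ ∪ ((closure C) : Set (Fin d → ℝ))ᶜ := by
        intro k hk
        by_contra hkk
        rw [Set.mem_union] at hkk
        push_neg at hkk
        obtain ⟨hk1, hk2⟩ := hkk
        rw [Set.notMem_compl_iff] at hk1 hk2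
        have hk0 : k = 0 := clC_zero k hk2 (Set.mem_neg.mp hk1)
        exact hzero_not (hk0 ▸ hk)
      have hne1 : (⇑L '' Q ∩ (-(closure C))ᶜ).Nonempty := by
        obtain ⟨k, hk1, hk2⟩ := Set.not_subset.mp hc2
        exact ⟨k, hk1, hk2⟩
      have hne2 : (⇑L '' Q ∩ ((closure C) : Set (Fin d → ℝ))ᶜ).Nonempty := by
        obtain ⟨k, hk1, hk2⟩ := Set.not_subset.mp hc1
        exact ⟨k, hk1, hk2⟩
      obtain ⟨k, hks, hkU, hkV⟩ := hpre2 _ _ hU hV hcover hne1 hne2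
      rcases hsub_union hks with h | h
      · exact hkV h
      · exact hkU h
    -- extract the sign and the linear constraints
    obtain ⟨τ, hτ, hτmem⟩ : ∃ τ : ℝ, τ ≠ 0 ∧ ∀ {α β : ℝ}, 0 < α → 0 < β →
        τ • (α • u + β • v) ∈ closure C := by
      rcases hdi with h | h
      · exact ⟨1, one_ne_zero, fun {α β} hα hβ => by
          rw [one_smul]
          exact h ⟨(α, β), ⟨hα, hβ⟩, rfl⟩⟩
      · refine ⟨-1, by norm_num, fun {α β} hα hβ => ?_⟩
        rw [neg_one_smul]
        exact Set.mem_neg.mp (h ⟨(α, β), ⟨hα, hβ⟩, rfl⟩)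
    have hphiτ : ∀ α β : ℝ, φ (τ • (α • u + β • v)) = α * (τ * φ u) + β * (τ * φ v) := by
      intro α β
      rw [φ.map_smul, map_add, φ.map_smul, φ.map_smul]
      simp only [smul_eq_mul]
      ring
    have hkeyle : ∀ {α β : ℝ}, 0 < α → 0 < β →
        α * (τ * φ u) + β * (τ * φ v) ≤ 0 := by
      intro α β hα hβ
      have h9 := hφclC (hτmem hα hβ)
      rwa [Set.mem_setOf_eq, hphiτ] at h9
    have hxrel : ∃ c : ℝ, c ≠ 0 ∧ a₁ • u + b₁ • v = c • xbar := by
      have h8 : Projectivization.mk ℝ (a₁ • u + b₁ • v) hne₁ =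
          Projectivization.mk ℝ xbar hxbar_ne := by
        rw [hxbar_mk, ← hxeq₁]
      rw [Projectivization.mk_eq_mk_iff] at h8
      obtain ⟨cu, hcu⟩ := h8
      exact ⟨(cu : ℝ), cu.ne_zero, hcu.symm⟩
    obtain ⟨c, hc, hcombo⟩ := hxrel
    -- the sign of τ * c is positive
    have hτc_mem : (τ * c) • xbar ∈ closure C := by
      have h9 := hτmem ha₁ hb₁
      rwa [hcombo, smul_smul] at h9
    have hτcpos : 0 < τ * c := by
      rcases lt_trichotomy (τ * c) 0 with h | h | h
      · exfalso
        have h10 : -((τ * c) • xbar) ∈ closure C := by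
          rw [← neg_smul]
          exact clC_smul (by linarith) hxbar_clC
        have h11 := clC_zero _ hτc_mem h10
        rcases smul_eq_zero.mp h11 with h12 | h12
        · exact (mul_ne_zero hτ hc) h12
        · exact hxbar_ne h12
      · exact absurd (mul_ne_zero hτ hc) (by rw [h]; simp)
      · exact h
    have hkey0 : a₁ * (τ * φ u) + b₁ * (τ * φ v) = 0 := by
      have h9 : φ (τ • (a₁ • u + b₁ • v)) = 0 := by
        rw [hcombo, smul_smul, φ.map_smul, smul_eq_mul, hφxbar, mul_zero]
      rw [hphiτ] at h9
      exact h9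
    -- conclude that φ kills u and v
    have hA : τ * φ u = 0 := by
      have h9 := hkeyle (by linarith : (0:ℝ) < 2 * a₁) hb₁
      have h10 := hkeyle (by linarith : (0:ℝ) < a₁ / 2) hb₁
      nlinarith
    have hB : τ * φ v = 0 := by
      have h9 := hkeyle ha₁ (by linarith : (0:ℝ) < 2 * b₁)
      have h10 := hkeyle ha₁ (by linarith : (0:ℝ) < b₁ / 2)
      nlinarith
    have hφu : φ u = 0 := by
      rcases mul_eq_zero.mp hA with h | h
      · exact absurd h hτ
      · exact h
    have hφv : φ v = 0 := by
      rcases mul_eq_zero.mp hB with h | h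
      · exact absurd h hτ
      · exact h
    -- conclude for z
    obtain ⟨c₂, hc₂, hrep₂⟩ := exists_unit_rep hne₂
    rw [← hzeq₂] at hrep₂
    rw [hrep₂, φ.map_smul, smul_eq_mul, map_add, φ.map_smul, φ.map_smul, hφu, hφv]
    simp
  -- the span of the face is killed by φ
  have span_ker : projSpan (face Ω x) ≤ LinearMap.ker (φ : (Fin d → ℝ) →ₗ[ℝ] ℝ) := by
    rw [projSpan]
    refine Submodule.span_le.mpr ?_
    rintro _ ⟨z, hz, rfl⟩
    exact LinearMap.mem_ker.mpr (face_ker z hz)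
  -- Claim 8 : y lies in the projectivized kernel
  have claim8 : y ∈ Pb (LinearMap.ker Tbar.mulVecLin) := by
    rw [Pb, Set.mem_setOf_eq, LinearMap.mem_ker, Matrix.mulVecLin_apply]
    by_contra hTy
    set ybar : Fin d → ℝ := y.rep with hybar
    have hybar_ne : ybar ≠ 0 := y.rep_nonzero
    set w : ℕ → Fin d → ℝ := fun n => projMat ((g n)⁻¹ • p₀) *ᵥ ybar with hwdef
    have hwlim : Filter.Tendsto w Filter.atTop (nhds ybar) := by
      have h1 : Filter.Tendsto (fun n => projMat ((g n)⁻¹ • p₀)) Filter.atTop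
          (nhds (projMat y)) := (continuous_projMat.tendsto y).comp hgy
      have h2 : Filter.Tendsto w Filter.atTop (nhds (projMat y *ᵥ ybar)) :=
        (mulVec_cont.tendsto (projMat y, ybar)).comp (h1.prodMk_nhds tendsto_const_nhds)
      have h3 : projMat y *ᵥ ybar = ybar := by
        show ((ybar ⬝ᵥ ybar)⁻¹ • Matrix.vecMulVec ybar ybar) *ᵥ ybar = ybar
        rw [Matrix.smul_mulVec, vecMulVec_mulVec, smul_smul,
          inv_mul_cancel₀ (fun h => hybar_ne (dotProduct_self_eq_zero.mp h)), one_smul]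
      rw [h3] at h2
      exact h2
    have hev : ∀ᶠ n in Filter.atTop, w n ≠ 0 :=
      hwlim (isOpen_ne.mem_nhds hybar_ne)
    have hwmk : ∀ n (h : w n ≠ 0), Projectivization.mk ℝ (w n) h = (g n)⁻¹ • p₀ := by
      intro n h
      set z : PSp d := (g n)⁻¹ • p₀ with hzdef
      have h1 : w n = ((z.rep ⬝ᵥ z.rep)⁻¹ * (z.rep ⬝ᵥ ybar)) • z.rep := by
        show projMat z *ᵥ ybar = _
        show ((z.rep ⬝ᵥ z.rep)⁻¹ • Matrix.vecMulVec z.rep z.rep) *ᵥ ybar = _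
        rw [Matrix.smul_mulVec, vecMulVec_mulVec, smul_smul]
      have hsc : (z.rep ⬝ᵥ z.rep)⁻¹ * (z.rep ⬝ᵥ ybar) ≠ 0 := by
        intro h0
        rw [h1, h0, zero_smul] at h
        exact h rfl
      calc Projectivization.mk ℝ (w n) h
          = Projectivization.mk ℝ (((z.rep ⬝ᵥ z.rep)⁻¹ * (z.rep ⬝ᵥ ybar)) • z.rep)
            (h1 ▸ h) := mk_eq_of_eq h1 h
        _ = Projectivization.mk ℝ z.rep z.rep_nonzero := mk_smul_eq hsc _ z.rep_nonzero
        _ = z := Projectivization.mk_rep z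
    have hstep : Filter.Tendsto (fun n => ((M n : Matrix (Fin d) (Fin d) ℝ), w n))
        Filter.atTop (nhds (Tbar, ybar)) := hconv.prodMk_nhds hwlim
    have hstep2 : Filter.Tendsto (fun n => M n *ᵥ w n) Filter.atTop
        (nhds (Tbar *ᵥ ybar)) := (mulVec_cont.tendsto (Tbar, ybar)).comp hstep
    have htend2 : Filter.Tendsto (fun n => mkP p₀ (M n *ᵥ w n)) Filter.atTop
        (nhds (mkP p₀ (Tbar *ᵥ ybar))) := (continuousAt_mkP p₀ hTy).tendsto.comp hstep2
    have hevp : ∀ᶠ n in Filter.atTop, mkP p₀ (M n *ᵥ w n) = p₀ := by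
      refine hev.mono (fun n hn => ?_)
      rw [mkP_eq p₀ (M_ne n hn), ← smulg n hn, hwmk n hn]
      exact smul_inv_smul _ _
    have hp₀eq : p₀ = mkP p₀ (Tbar *ᵥ ybar) := by
      refine tendsto_nhds_unique ?_ htend2
      exact (tendsto_const_nhds : Filter.Tendsto (fun _ : ℕ => p₀) _ _).congr'
        (hevp.mono fun n hn => hn.symm)
    have hmem_range : Tbar *ᵥ ybar ∈ LinearMap.range Tbar.mulVecLin :=
      ⟨ybar, Matrix.mulVecLin_apply _ _⟩
    have hker2 : φ (Tbar *ᵥ ybar) = 0 := by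
      have h22 := span_ker (claim7 hmem_range)
      rw [LinearMap.mem_ker] at h22
      exact h22
    have h20 : Projectivization.mk ℝ (Tbar *ᵥ ybar) hTy = Projectivization.mk ℝ pbar hpne := by
      rw [hpmk, ← mkP_eq p₀ hTy]
      exact hp₀eq.symm
    rw [Projectivization.mk_eq_mk_iff] at h20
    obtain ⟨cu, hcu⟩ := h20
    rw [Units.smul_def] at hcu
    have hφp0 : φ pbar = 0 := by
      have h21 : (cu : ℝ) * φ pbar = 0 := by
        rw [← smul_eq_mul, ← φ.map_smul, hcu, hker2]
      rcases mul_eq_zero.mp h21 with h22 | h22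
      · exact absurd h22 cu.ne_zero
      · exact h22
    exact absurd hφp0 (ne_of_lt (hφCneg _ hpC))
  exact ⟨claim7, ker_dis, claim8⟩
end CCProj
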